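/- Let N, S be positive integers and α a positive even integer. For each s ∈ [S] let f_s : [0,1]^N → ℝ be continuous, and set F(P) = Σ_{s=1}^S f_s(P_{:s}) and R_γ(P) = F(P) + γ · Σ_{i=1}^N Σ_{s=1}^S (1 − (2 P_{is} − 1)^α) for P ∈ [0,1]^{N×S}. Let (γ_k) be a sequence of reals with γ_k → +∞ and for each k let P_k be a minimizer of R_{γ_k} over [0,1]^{N×S}. Then every limit point P* of the sequence (P_k) is a binary matrix, P* ∈ {0,1}^{N×S}, and for every s ∈ [S] the column P*_{:s} minimizes f_s over {0,1}^N. -/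

import Mathlib

open Filter

lemma ent_term_nonneg {α : ℕ} (hαeven : Even α) {x : ℝ} (hx : x ∈ Set.Icc (0:ℝ) 1) :
    0 ≤ 1 - (2 * x - 1) ^ α := by
  have h1 : |2 * x - 1| ≤ 1 := by
    rw [abs_le]; constructor
    · linarith [hx.1]
    · linarith [hx.2]
  have h2 : (2 * x - 1) ^ α = |2 * x - 1| ^ α := (hαeven.pow_abs _).symm
  have h3 : |2 * x - 1| ^ α ≤ 1 := pow_le_one₀ (abs_nonneg (2 * x - 1)) h1
  linarith [h2 ▸ h3]

lemma ent_term_zero {α : ℕ} (hαeven : Even α) {x : ℝ} (hx : x = 0 ∨ x = 1) :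
    1 - (2 * x - 1) ^ α = 0 := by
  rcases hx with h | h <;> subst h <;> norm_num [hαeven.neg_one_pow]

/-- Let `f_s : [0,1]^N → ℝ` be continuous, `R_γ(P) = Σ_s f_s(P_{:s}) + γ·S_α(P)`
with `S_α(P) = Σ_{i,s} (1 - (2 P_{is} - 1)^α)`. If `γ_k → +∞` and each `P_k`
minimizes `R_{γ_k}` over `[0,1]^{N×S}`, then every limit point `P*` of `(P_k)`
is a binary matrix whose every column `P*_{:s}` minimizes `f_s` over `{0,1}^N`. -/
theorem limit_points_binary_and_columnwise_optimal
    (N S : ℕ) (hN : 0 < N) (hS : 0 < S) (α : ℕ) (hα : 0 < α) (hαeven : Even α)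
    (f : Fin S → (Fin N → ℝ) → ℝ)
    (hf : ∀ s, ContinuousOn (f s) {p : Fin N → ℝ | ∀ i, p i ∈ Set.Icc (0 : ℝ) 1})
    (γ : ℕ → ℝ) (hγ : Tendsto γ atTop atTop)
    (P : ℕ → Fin N → Fin S → ℝ)
    (hPmem : ∀ k, ∀ i s, P k i s ∈ Set.Icc (0 : ℝ) 1)
    (hPmin : ∀ k, ∀ Q : Fin N → Fin S → ℝ, (∀ i s, Q i s ∈ Set.Icc (0 : ℝ) 1) →
      (∑ s, f s (fun i => P k i s)) +
          γ k * ∑ i, ∑ s, (1 - (2 * P k i s - 1) ^ α) ≤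
        (∑ s, f s (fun i => Q i s)) +
          γ k * ∑ i, ∑ s, (1 - (2 * Q i s - 1) ^ α))
    (Pstar : Fin N → Fin S → ℝ)
    (hlim : ∃ φ : ℕ → ℕ, StrictMono φ ∧
      Tendsto (fun k => P (φ k)) atTop (nhds Pstar)) :
    (∀ i s, Pstar i s = 0 ∨ Pstar i s = 1) ∧
      ∀ s, ∀ y : Fin N → ℝ, (∀ i, y i = 0 ∨ y i = 1) →
        f s (fun i => Pstar i s) ≤ f s y := by
  obtain ⟨φ, hφ, hφlim⟩ := hlim
  have hcomp : ∀ i s, Tendsto (fun k => P (φ k) i s) atTop (nhds (Pstar i s)) := by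
    intro i s
    exact (tendsto_pi_nhds.mp ((tendsto_pi_nhds.mp hφlim) i)) s
  have hPstarmem : ∀ i s, Pstar i s ∈ Set.Icc (0:ℝ) 1 := fun i s =>
    isClosed_Icc.mem_of_tendsto (hcomp i s)
      (Eventually.of_forall fun k => hPmem (φ k) i s)
  have hcol : ∀ s, Tendsto (fun k => (fun i => P (φ k) i s)) atTop
      (nhds (fun i => Pstar i s)) := fun s => tendsto_pi_nhds.mpr (fun i => hcomp i s)
  have hfcol : ∀ s, Tendsto (fun k => f s (fun i => P (φ k) i s)) atTop
      (nhds (f s (fun i => Pstar i s))) := by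
    intro s
    have hcw : ContinuousWithinAt (f s) {p : Fin N → ℝ | ∀ i, p i ∈ Set.Icc (0:ℝ) 1}
        (fun i => Pstar i s) := (hf s) _ (fun i => hPstarmem i s)
    exact hcw.tendsto.comp (tendsto_nhdsWithin_iff.mpr
      ⟨hcol s, Eventually.of_forall fun k i => hPmem (φ k) i s⟩)
  have hFlim : Tendsto (fun k => ∑ s, f s (fun i => P (φ k) i s)) atTop
      (nhds (∑ s, f s (fun i => Pstar i s))) :=
    tendsto_finset_sum _ (fun s _ => hfcol s)
  have hElim : Tendsto (fun k => ∑ i, ∑ s, (1 - (2 * P (φ k) i s - 1) ^ α)) atTop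
      (nhds (∑ i, ∑ s, (1 - (2 * Pstar i s - 1) ^ α))) := by
    apply tendsto_finset_sum; intro i _
    apply tendsto_finset_sum; intro s _
    exact tendsto_const_nhds.sub ((((hcomp i s).const_mul 2).sub_const 1).pow α)
  have hEnonneg : ∀ k, 0 ≤ ∑ i, ∑ s, (1 - (2 * P k i s - 1) ^ α) := fun k =>
    Finset.sum_nonneg fun i _ => Finset.sum_nonneg fun s _ =>
      ent_term_nonneg hαeven (hPmem k i s)
  have hγφ : Tendsto (fun k => γ (φ k)) atTop atTop := hγ.comp hφ.tendsto_atTop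
  -- key comparison against binary matrices
  have key : ∀ (Q : Fin N → Fin S → ℝ), (∀ i s, Q i s = 0 ∨ Q i s = 1) → ∀ k,
      (∑ s, f s (fun i => P (φ k) i s)) +
        γ (φ k) * ∑ i, ∑ s, (1 - (2 * P (φ k) i s - 1) ^ α) ≤
      ∑ s, f s (fun i => Q i s) := by
    intro Q hQ k
    have hQmem : ∀ i s, Q i s ∈ Set.Icc (0:ℝ) 1 := by
      intro i s; rcases hQ i s with h | h <;> rw [h] <;> constructor <;> norm_num
    have hEQ : (∑ i, ∑ s, (1 - (2 * Q i s - 1) ^ α)) = 0 :=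
      Finset.sum_eq_zero fun i _ => Finset.sum_eq_zero fun s _ =>
        ent_term_zero hαeven (hQ i s)
    have h := hPmin (φ k) Q hQmem
    rw [hEQ, mul_zero, add_zero] at h
    exact h
  -- Part 1: the limit is binary
  have hEzero : (∑ i, ∑ s, (1 - (2 * Pstar i s - 1) ^ α)) = 0 := by
    by_contra hne
    have hEstarnn : 0 ≤ ∑ i, ∑ s, (1 - (2 * Pstar i s - 1) ^ α) :=
      Finset.sum_nonneg fun i _ => Finset.sum_nonneg fun s _ =>
        ent_term_nonneg hαeven (hPstarmem i s)
    have hpos : 0 < ∑ i, ∑ s, (1 - (2 * Pstar i s - 1) ^ α) :=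
      lt_of_le_of_ne hEstarnn (Ne.symm hne)
    have h1 : Tendsto (fun k => γ (φ k) *
        ∑ i, ∑ s, (1 - (2 * P (φ k) i s - 1) ^ α)) atTop atTop :=
      Tendsto.atTop_mul_pos hpos hγφ hElim
    have hbd : ∀ k, γ (φ k) * (∑ i, ∑ s, (1 - (2 * P (φ k) i s - 1) ^ α)) ≤
        (∑ s, f s (fun i => (0:ℝ))) - ∑ s, f s (fun i => P (φ k) i s) := by
      intro k
      have := key (fun _ _ => 0) (fun _ _ => Or.inl rfl) k
      linarith
    have h2 : Tendsto (fun k => (∑ s, f s (fun i => (0:ℝ))) -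
        ∑ s, f s (fun i => P (φ k) i s)) atTop atTop :=
      tendsto_atTop_mono hbd h1
    exact not_tendsto_atTop_of_tendsto_nhds (tendsto_const_nhds.sub hFlim) h2
  have hterm : ∀ i s, 1 - (2 * Pstar i s - 1) ^ α = 0 := by
    intro i s
    have h1 := (Finset.sum_eq_zero_iff_of_nonneg (fun i _ =>
      Finset.sum_nonneg fun s _ => ent_term_nonneg hαeven (hPstarmem i s))).mp hEzero
      i (Finset.mem_univ i)
    exact (Finset.sum_eq_zero_iff_of_nonneg (fun s _ =>
      ent_term_nonneg hαeven (hPstarmem i s))).mp h1 s (Finset.mem_univ s)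
  have hbin : ∀ i s, Pstar i s = 0 ∨ Pstar i s = 1 := by
    intro i s
    have h : (2 * Pstar i s - 1) ^ α = 1 := by linarith [hterm i s]
    rcases (pow_eq_one_iff_cases.mp h) with h' | h' | h'
    · omega
    · right; linarith
    · left; linarith [h'.1]
  refine ⟨hbin, ?_⟩
  -- Part 2: columnwise optimality
  intro s y hy
  set Q : Fin N → Fin S → ℝ := fun i t => if t = s then y i else Pstar i t with hQdef
  have hQbin : ∀ i t, Q i t = 0 ∨ Q i t = 1 := by
    intro i t; by_cases h : t = s
    · simpa [hQdef, h] using hy i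
    · simpa [hQdef, h] using hbin i t
  have hev : ∀ᶠ k in atTop, (∑ t, f t (fun i => P (φ k) i t)) ≤
      ∑ t, f t (fun i => Q i t) := by
    filter_upwards [hγφ.eventually_ge_atTop 0] with k hk
    have h := key Q hQbin k
    have hnn := mul_nonneg hk (hEnonneg (φ k))
    linarith
  have hsum : (∑ t, f t (fun i => Pstar i t)) ≤ ∑ t, f t (fun i => Q i t) :=
    le_of_tendsto hFlim hev
  have hcongr : ∀ t ∈ Finset.univ.erase s,
      f t (fun i => Q i t) = f t (fun i => Pstar i t) := by
    intro t ht
    have hts : t ≠ s := Finset.ne_of_mem_erase ht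
    simp [hQdef, hts]
  have hQs : (fun i => Q i s) = y := by funext i; simp [hQdef]
  rw [← Finset.add_sum_erase _ (fun t => f t (fun i => Pstar i t)) (Finset.mem_univ s),
      ← Finset.add_sum_erase _ (fun t => f t (fun i => Q i t)) (Finset.mem_univ s),
      Finset.sum_congr rfl hcongr, hQs] at hsum
  linarith
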